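/- Let q be a prime power, n ≥ 3 an integer, and V = F_q^n; let SL(n,q) be the group of linear automorphisms of V of determinant 1 and e₁ the first standard basis vector. Let G_0 be a subgroup of ΓL(n,q) containing SL(n,q) as a normal subgroup. Suppose P is a nontrivial imprimitive block for the action of G_0 on V ∖ {0} with e₁ ∈ P. Then P ⊆ {a·e₁ : a ∈ F_q} and the set {a ∈ F_q^× : a·e₁ ∈ P} is a subgroup of the multiplicative group F_q^×. -/

import Mathlib

open Set

lemma exists_sl_equiv {F : Type*} [Field F] [Fintype F] {n : ℕ} (hn : 3 ≤ n)
    {x₁ x₂ y₁ y₂ : Fin n → F}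
    (hx : LinearIndependent F ![x₁, x₂]) (hy : LinearIndependent F ![y₁, y₂]) :
    ∃ e : (Fin n → F) ≃ₗ[F] (Fin n → F),
      LinearMap.det (e : (Fin n → F) →ₗ[F] (Fin n → F)) = 1 ∧ e x₁ = y₁ ∧ e x₂ = y₂ := by
  classical
  -- extend to bases
  have hxr : LinearIndependent F ((↑) : Set.range ![x₁, x₂] → (Fin n → F)) := (linearIndepOn_id_range_iff hx.injective).mpr hx
  have hyr : LinearIndependent F ((↑) : Set.range ![y₁, y₂] → (Fin n → F)) := (linearIndepOn_id_range_iff hy.injective).mpr hy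
  obtain ⟨sX, -, hsubX, hspanX, hliX⟩ := exists_linearIndepOn_id_extension hxr (subset_univ _)
  obtain ⟨sY, -, hsubY, hspanY, hliY⟩ := exists_linearIndepOn_id_extension hyr (subset_univ _)
  haveI : Fintype sX := (Set.toFinite sX).fintype
  haveI : Fintype sY := (Set.toFinite sY).fintype
  have hspX : ⊤ ≤ Submodule.span F (Set.range ((↑) : sX → (Fin n → F))) := by
    rw [Subtype.range_coe]; exact fun v _ => hspanX (mem_univ v)
  have hspY : ⊤ ≤ Submodule.span F (Set.range ((↑) : sY → (Fin n → F))) := by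
    rw [Subtype.range_coe]; exact fun v _ => hspanY (mem_univ v)
  let bX : Module.Basis sX F (Fin n → F) := Module.Basis.mk hliX hspX
  let bY : Module.Basis sY F (Fin n → F) := Module.Basis.mk hliY hspY
  have cardX : Fintype.card sX = n := by
    have h := (Module.finrank_eq_card_basis bX).symm
    rwa [Module.finrank_fin_fun] at h
  have cardY : Fintype.card sY = n := by
    have h := (Module.finrank_eq_card_basis bY).symm
    rwa [Module.finrank_fin_fun] at h
  have hx1 : x₁ ∈ sX := hsubX ⟨0, rfl⟩
  have hx2 : x₂ ∈ sX := hsubX ⟨1, rfl⟩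
  have hy1 : y₁ ∈ sY := hsubY ⟨0, rfl⟩
  have hy2 : y₂ ∈ sY := hsubY ⟨1, rfl⟩
  have hxne : x₁ ≠ x₂ := by
    intro h
    have h01 : ![x₁, x₂] (0 : Fin 2) = ![x₁, x₂] 1 := by simp [h]
    exact absurd (hx.injective h01) (by decide)
  have hyne : y₁ ≠ y₂ := by
    intro h
    have h01 : ![y₁, y₂] (0 : Fin 2) = ![y₁, y₂] 1 := by simp [h]
    exact absurd (hy.injective h01) (by decide)
  set a1 : sX := ⟨x₁, hx1⟩
  set a2 : sX := ⟨x₂, hx2⟩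
  set b1 : sY := ⟨y₁, hy1⟩
  set b2 : sY := ⟨y₂, hy2⟩
  have ha12 : a1 ≠ a2 := fun h => hxne (congrArg Subtype.val h)
  have hb12 : b1 ≠ b2 := fun h => hyne (congrArg Subtype.val h)
  -- index equiv sending a1 ↦ b1, a2 ↦ b2
  let e0 : sX ≃ sY := Fintype.equivOfCardEq (by rw [cardX, cardY])
  let e1' : sX ≃ sY := e0.trans (Equiv.swap (e0 a1) b1)
  have he1a1 : e1' a1 = b1 := by simp [e1']
  let e2' : sX ≃ sY := e1'.trans (Equiv.swap (e1' a2) b2)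
  have he2a2 : e2' a2 = b2 := by simp [e2']
  have he2a1 : e2' a1 = b1 := by
    have h1 : b1 ≠ e1' a2 := by
      rw [← he1a1]; exact fun h => ha12 (e1'.injective h)
    simp only [e2', Equiv.trans_apply, he1a1]
    exact Equiv.swap_apply_of_ne_of_ne h1 hb12
  let eE : (Fin n → F) ≃ₗ[F] (Fin n → F) := bX.equiv bY e2'
  have hbXa1 : bX a1 = x₁ := by simp [bX, Module.Basis.coe_mk, a1]
  have hbXa2 : bX a2 = x₂ := by simp [bX, Module.Basis.coe_mk, a2]
  have hbYb1 : bY b1 = y₁ := by simp [bY, Module.Basis.coe_mk, b1]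
  have hbYb2 : bY b2 = y₂ := by simp [bY, Module.Basis.coe_mk, b2]
  have heE1 : eE x₁ = y₁ := by
    rw [← hbXa1, Module.Basis.equiv_apply, he2a1, hbYb1]
  have heE2 : eE x₂ = y₂ := by
    rw [← hbXa2, Module.Basis.equiv_apply, he2a2, hbYb2]
  -- determinant correction
  obtain ⟨dU, hdU⟩ := eE.isUnit_det'
  obtain ⟨j₀, hj1, hj2⟩ : ∃ j : sY, j ≠ b1 ∧ j ≠ b2 := by
    have h2 : ({b1, b2} : Finset sY).card ≤ 2 :=
      (Finset.card_insert_le _ _).trans (by simp)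
    have hns : ¬ (Finset.univ : Finset sY) ⊆ {b1, b2} := by
      intro h
      have := Finset.card_le_card h
      rw [Finset.card_univ, cardY] at this
      omega
    obtain ⟨j, -, hj⟩ := Finset.not_subset.mp hns
    simp only [Finset.mem_insert, Finset.mem_singleton, not_or] at hj
    exact ⟨j, hj.1, hj.2⟩
  let u : sY → Fˣ := fun i => if i = j₀ then dU⁻¹ else 1
  let s : (Fin n → F) ≃ₗ[F] (Fin n → F) := bY.equiv (bY.unitsSMul u) (Equiv.refl sY)
  have hs : ∀ j, s (bY j) = (u j : F) • bY j := by
    intro j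
    rw [Module.Basis.equiv_apply, Equiv.refl_apply, Module.Basis.unitsSMul_apply, Units.smul_def]
  have hmat : LinearMap.toMatrix bY bY (s : (Fin n → F) →ₗ[F] (Fin n → F)) =
      Matrix.diagonal (fun i => ((u i : Fˣ) : F)) := by
    ext i j
    rw [LinearMap.toMatrix_apply, LinearEquiv.coe_coe, hs, map_smul, Module.Basis.repr_self]
    by_cases h : i = j
    · subst h; simp [Matrix.diagonal_apply_eq]
    · simp [Matrix.diagonal_apply_ne _ h, Finsupp.single_apply, Ne.symm h]
  have hdets : LinearMap.det (s : (Fin n → F) →ₗ[F] (Fin n → F)) = ((dU⁻¹ : Fˣ) : F) := by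
    rw [← LinearMap.det_toMatrix bY, hmat, Matrix.det_diagonal]
    have : ∀ i, ((u i : Fˣ) : F) = if i = j₀ then ((dU⁻¹ : Fˣ) : F) else 1 := by
      intro i; simp [u, apply_ite (Units.val)]
    rw [Finset.prod_congr rfl fun i _ => this i, Finset.prod_ite_eq']
    simp
  have hsy1 : s y₁ = y₁ := by
    rw [← hbYb1, hs]
    have : u b1 = 1 := if_neg (fun h => hj1 h.symm)
    rw [this]; simp
  have hsy2 : s y₂ = y₂ := by
    rw [← hbYb2, hs]
    have : u b2 = 1 := if_neg (fun h => hj2 h.symm)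
    rw [this]; simp
  refine ⟨eE.trans s, ?_, ?_, ?_⟩
  · rw [LinearEquiv.coe_trans, LinearMap.det_comp, hdets, ← hdU]
    rw [← Units.val_mul, inv_mul_cancel]
    simp
  · rw [LinearEquiv.trans_apply, heE1, hsy1]
  · rw [LinearEquiv.trans_apply, heE2, hsy2]

lemma exists_sl_perm {F : Type*} [Field F] [Fintype F] {n : ℕ} (hn : 3 ≤ n)
    {x₁ x₂ y₁ y₂ : Fin n → F}
    (hx : LinearIndependent F ![x₁, x₂]) (hy : LinearIndependent F ![y₁, y₂]) :
    ∃ g : Equiv.Perm (Fin n → F),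
      (∃ A : Matrix (Fin n) (Fin n) F, A.det = 1 ∧ ∀ v, g v = A.mulVec v) ∧
      g x₁ = y₁ ∧ g x₂ = y₂ := by
  classical
  obtain ⟨e, hdet, h1, h2⟩ := exists_sl_equiv hn hx hy
  refine ⟨e.toEquiv, ⟨LinearMap.toMatrix' (e : (Fin n → F) →ₗ[F] (Fin n → F)), ?_, ?_⟩, h1, h2⟩
  · rw [LinearMap.det_toMatrix', hdet]
  · intro v
    rw [← Matrix.toLin'_apply, Matrix.toLin'_toMatrix']
    rfl

/-- Section 4.4: let q be a prime power, n ≥ 3, V = F_q^n, and let G₀ ≤ ΓL(n,q)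
contain SL(n,q) as a normal subgroup. If P is a nontrivial imprimitive block of G₀
on V ∖ {0} containing e₁, then P ⊆ ⟨e₁⟩ and {a ∈ F_q^× : a·e₁ ∈ P} is a
subgroup of F_q^×. -/
theorem stmt_19 {F : Type*} [Field F] [Fintype F] (n : ℕ) (hn : 3 ≤ n)
    (G₀ : Subgroup (Equiv.Perm (Fin n → F)))
    -- G₀ ≤ ΓL(2,q): every element of G₀ is an additive semilinear bijection
    (hGammaL : ∀ g ∈ G₀, (∀ u v, g (u + v) = g u + g v) ∧
        ∃ σ : F ≃+* F, ∀ (c : F) (u), g (c • u) = σ c • g u)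
    -- SL(2,q) ⊆ G₀
    (hSL_sub : ∀ g : Equiv.Perm (Fin n → F),
        (∃ A : Matrix (Fin n) (Fin n) F, A.det = 1 ∧ ∀ v, g v = A.mulVec v) → g ∈ G₀)
    -- SL(2,q) is normal in G₀
    (hSL_normal : ∀ g ∈ G₀, ∀ h : Equiv.Perm (Fin n → F),
        (∃ A : Matrix (Fin n) (Fin n) F, A.det = 1 ∧ ∀ v, h v = A.mulVec v) →
        ∃ A' : Matrix (Fin n) (Fin n) F, A'.det = 1 ∧ ∀ v, (g * h * g⁻¹) v = A'.mulVec v)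
    (P : Set (Fin n → F))
    (hP0 : ∀ v ∈ P, v ≠ 0)
    (hPe : (fun i : Fin n => if (i : ℕ) = 0 then (1 : F) else 0) ∈ P)
    (hPlarge : 1 < P.ncard)
    (hPsmall : P.ncard < Fintype.card (Fin n → F) - 1)
    (hPblock : ∀ g ∈ G₀, ⇑g '' P = P ∨ (⇑g '' P) ∩ P = ∅) :
    (P ⊆ {v | ∃ a : F, v = a • fun i : Fin n => if (i : ℕ) = 0 then (1 : F) else 0}) ∧
    ∃ U : Subgroup Fˣ, ∀ a : Fˣ,
      ((a : F) • (fun i : Fin n => if (i : ℕ) = 0 then (1 : F) else 0) ∈ P ↔ a ∈ U) := by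
  classical
  set e₁ : Fin n → F := fun i : Fin n => if (i : ℕ) = 0 then (1 : F) else 0 with he₁def
  set e₂ : Fin n → F := fun i : Fin n => if (i : ℕ) = 1 then (1 : F) else 0 with he₂def
  have i0 : Fin n := ⟨0, by omega⟩
  set L : Set (Fin n → F) := {v | ∃ a : F, v = a • e₁} with hLdef
  -- basic evaluations
  have he₁ne : e₁ ≠ 0 := by
    intro h
    have := congrFun h ⟨0, by omega⟩
    simp [he₁def] at this
  -- L facts
  have hLsmul : ∀ (c : F) (v), v ∈ L → c • v ∈ L := by
    rintro c v ⟨a, rfl⟩; exact ⟨c * a, (smul_smul c a e₁)⟩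
  have hindep : ∀ v, v ∉ L → LinearIndependent F ![e₁, v] := by
    intro v hv
    rw [linearIndependent_fin2]
    constructor
    · simp only [Matrix.cons_val_one, Matrix.head_cons, Matrix.cons_val_zero]
      intro h
      exact hv ⟨0, by simp [h]⟩
    · intro a
      simp only [Matrix.cons_val_one, Matrix.head_cons, Matrix.cons_val_zero]
      intro h
      by_cases ha : a = 0
      · rw [ha, zero_smul] at h; exact he₁ne h.symm
      · exact hv ⟨a⁻¹, by rw [← h, smul_smul, inv_mul_cancel₀ ha, one_smul]⟩
  have he₂L : e₂ ∉ L := by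
    rintro ⟨a, ha⟩
    have := congrFun ha ⟨1, by omega⟩
    simp [he₂def, he₁def] at this
  have hindepE : ∀ a : F, a ≠ 0 → LinearIndependent F ![a • e₁, e₂] := by
    intro a ha
    rw [linearIndependent_fin2]
    constructor
    · simp only [Matrix.cons_val_one, Matrix.head_cons]
      intro h
      have := congrFun h ⟨1, by omega⟩
      simp [he₂def] at this
    · intro c
      simp only [Matrix.cons_val_one, Matrix.head_cons, Matrix.cons_val_zero]
      intro h
      have : a = 0 := by
        simpa [he₂def, he₁def] using (congrFun h ⟨0, by omega⟩).symm
      exact ha this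
  have hindep12 : LinearIndependent F ![e₁, e₂] := by
    have := hindepE 1 one_ne_zero
    rwa [one_smul] at this
  -- block stabilization
  have stab : ∀ g : Equiv.Perm (Fin n → F),
      (∃ A : Matrix (Fin n) (Fin n) F, A.det = 1 ∧ ∀ v, g v = A.mulVec v) →
      (∃ p ∈ P, g p ∈ P) → ⇑g '' P = P := by
    rintro g hA ⟨p, hp, hgp⟩
    rcases hPblock g (hSL_sub g hA) with h | h
    · exact h
    · exact absurd h (by
        rw [Set.eq_empty_iff_forall_notMem]
        push_neg
        exact ⟨g p, Set.mem_image_of_mem _ hp, hgp⟩)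
  -- Step 1 : P ⊆ L
  have key : ∀ v ∈ P, v ∈ L := by
    by_contra h
    push_neg at h
    obtain ⟨v, hvP, hvL⟩ := h
    -- all vectors off the line are in P
    have hall : ∀ u, u ∉ L → u ∈ P := by
      intro u huL
      obtain ⟨g, hgSL, hg1, hg2⟩ := exists_sl_perm hn (hindep v hvL) (hindep u huL)
      have himg := stab g hgSL ⟨e₁, hPe, by rw [hg1]; exact hPe⟩
      rw [← hg2, ← himg]
      exact Set.mem_image_of_mem _ hvP
    -- some nonzero vector outside P
    obtain ⟨w, hw0, hwP⟩ : ∃ w : Fin n → F, w ≠ 0 ∧ w ∉ P := by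
      by_contra h
      push_neg at h
      have hsub : ({0}ᶜ : Set (Fin n → F)) ⊆ P := fun w hw => h w hw
      have h1 := Set.ncard_add_ncard_compl ({0} : Set (Fin n → F))
      rw [Set.ncard_singleton, Nat.card_eq_fintype_card] at h1
      have h2 := Set.ncard_le_ncard hsub (Set.toFinite P)
      omega
    have hwL : w ∈ L := by
      by_contra h
      exact hwP (hall w h)
    obtain ⟨a, rfl⟩ := hwL
    have ha : a ≠ 0 := by
      intro h
      rw [h, zero_smul] at hw0
      exact hw0 rfl
    -- independence of (e₂, a • e₁)
    have hyind : LinearIndependent F ![e₂, a • e₁] := by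
      rw [linearIndependent_fin2]
      constructor
      · simp only [Matrix.cons_val_one, Matrix.head_cons, Matrix.cons_val_zero]
        intro h
        rw [h] at hw0; exact hw0 rfl
      · intro c
        simp only [Matrix.cons_val_one, Matrix.head_cons, Matrix.cons_val_zero]
        intro h
        exact he₂L ⟨c * a, by rw [← h, smul_smul]⟩
    obtain ⟨g, hgSL, hg1, hg2⟩ := exists_sl_perm hn hindep12 hyind
    have he₂P : e₂ ∈ P := hall e₂ he₂L
    have himg := stab g hgSL ⟨e₁, hPe, by rw [hg1]; exact he₂P⟩
    apply hwP
    rw [← hg2, ← himg]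
    exact Set.mem_image_of_mem _ he₂P
  -- scalar stabilizers
  have scal : ∀ a : Fˣ, (a : F) • e₁ ∈ P →
      ∃ g : Equiv.Perm (Fin n → F), ⇑g '' P = P ∧ (∀ (c : F) (v), g (c • v) = c • g v) ∧
        g e₁ = (a : F) • e₁ := by
    intro a haP
    obtain ⟨g, hgSL, hg1, hg2⟩ := exists_sl_perm hn hindep12 (hindepE (a : F) a.ne_zero)
    obtain ⟨A, hAdet, hAv⟩ := hgSL
    refine ⟨g, stab g ⟨A, hAdet, hAv⟩ ⟨e₁, hPe, by rw [hg1]; exact haP⟩, ?_, hg1⟩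
    intro c v
    rw [hAv, hAv, Matrix.mulVec_smul]
  refine ⟨fun v hv => key v hv, ⟨{
      carrier := {a : Fˣ | (a : F) • e₁ ∈ P}
      one_mem' := by simpa using hPe
      mul_mem' := by
        rintro a b (ha : (a : F) • e₁ ∈ P) (hb : (b : F) • e₁ ∈ P)
        obtain ⟨g, himg, hlin, hg1⟩ := scal a ha
        have : g ((b : F) • e₁) ∈ P := by
          rw [← himg]; exact Set.mem_image_of_mem _ hb
        rw [hlin, hg1, smul_smul, mul_comm] at this
        show ((a * b : Fˣ) : F) • e₁ ∈ P
        rwa [Units.val_mul]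
      inv_mem' := by
        rintro a (ha : (a : F) • e₁ ∈ P)
        obtain ⟨g, himg, hlin, hg1⟩ := scal a ha
        show ((a⁻¹ : Fˣ) : F) • e₁ ∈ P
        have : g (((a⁻¹ : Fˣ) : F) • e₁) = e₁ := by
          rw [hlin, hg1, smul_smul]
          norm_cast
          rw [inv_mul_cancel]
          simp
        have hmem : g (((a⁻¹ : Fˣ) : F) • e₁) ∈ ⇑g '' P ↔ ((a⁻¹ : Fˣ) : F) • e₁ ∈ P :=
          ⟨fun h => by
            obtain ⟨x, hx, hgx⟩ := h
            rwa [← g.injective hgx], fun h => Set.mem_image_of_mem _ h⟩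
        rw [← hmem, himg, this]
        exact hPe }, fun a => Iff.rfl⟩⟩
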